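/- For every f ∈ L¹(ℝ), N ∈ ℕ with N ≥ 1, and all x, ξ ∈ ℝ (a.e. x), the Zak transform of the translate T_{1/N}f (where T_h f(y) = f(y−h)) satisfies Z_1(T_{1/N}f)(x, ξ) = ∑_{q=0}^{N-1} e^{-2πi(ξ+q)/N} Z_N(f)(x, ξ + q). -/

import Mathlib

open MeasureTheory Complex

/-- The Zak transform of `f` for the group `(1/N)ℤ`. -/
noncomputable def Zak (N : ℕ) (f : ℝ → ℂ) (x ξ : ℝ) : ℂ :=
  (N : ℂ)⁻¹ * ∑' k : ℤ,
    f (x + (k : ℝ) / N) * Complex.exp (-(2 * Real.pi * Complex.I * ((k : ℂ) / N) * ξ))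

open Finset

noncomputable def ee (r : ℝ) : ℂ := Complex.exp (r * Complex.I)

lemma ee_norm (r : ℝ) : ‖ee r‖ = 1 := by
  simp [ee, Complex.norm_exp_ofReal_mul_I]

lemma ee_pow (r : ℝ) (n : ℕ) : (ee r) ^ n = ee (n * r) := by
  rw [ee, ee, ← Complex.exp_nat_mul]
  congr 1
  push_cast
  ring

lemma ee_eq_one_iff {r : ℝ} : ee r = 1 ↔ ∃ n : ℤ, r = n * (2 * Real.pi) := by
  rw [ee, Complex.exp_eq_one_iff]
  constructor
  · rintro ⟨n, hn⟩
    refine ⟨n, ?_⟩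
    have hn' : (r : ℂ) * I = ((n : ℂ) * (2 * Real.pi)) * I := by rw [hn]; ring
    have := mul_right_cancel₀ Complex.I_ne_zero hn'
    exact_mod_cast this
  · rintro ⟨n, hn⟩
    exact ⟨n, by rw [hn]; push_cast; ring⟩

lemma two_pi_ne : (2 * Real.pi) ≠ 0 := by positivity

lemma sum_roots (N : ℕ) (hN : 1 ≤ N) (k : ℤ) :
    ∑ q ∈ Finset.range N, ee (-(2 * Real.pi * (k + 1) * q) / N) =
      if (N : ℤ) ∣ (k + 1) then (N : ℂ) else 0 := by
  have hN0 : (N : ℝ) ≠ 0 := by positivity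
  have hterm : ∀ q : ℕ, ee (-(2 * Real.pi * (k + 1) * q) / N) =
      (ee (-(2 * Real.pi * (k + 1)) / N)) ^ q := by
    intro q
    rw [ee_pow]
    congr 1
    ring
  simp_rw [hterm]
  by_cases hdvd : (N : ℤ) ∣ (k + 1)
  · rw [if_pos hdvd]
    obtain ⟨m, hm⟩ := hdvd
    have hz : ee (-(2 * Real.pi * (k + 1)) / N) = 1 := by
      apply ee_eq_one_iff.2 ⟨-m, ?_⟩
      have hkm : ((k : ℝ) + 1) = (N : ℝ) * m := by exact_mod_cast hm
      field_simp [hkm]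
      push_cast
      linear_combination -hkm
    simp [hz]
  · rw [if_neg hdvd]
    have hz : ee (-(2 * Real.pi * (k + 1)) / N) ≠ 1 := by
      intro h
      obtain ⟨n, hn⟩ := ee_eq_one_iff.1 h
      apply hdvd
      rw [div_eq_iff hN0] at hn
      have h2 : (2 * Real.pi) * ((k : ℝ) + 1) = (2 * Real.pi) * (-((n : ℝ) * N)) := by
        linear_combination -hn
      have h3 := mul_left_cancel₀ two_pi_ne h2
      refine ⟨-n, ?_⟩
      have : ((k + 1 : ℤ) : ℝ) = ((N * -n : ℤ) : ℝ) := by push_cast; linarith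
      exact_mod_cast this
    rw [geom_sum_eq hz]
    have hzN : (ee (-(2 * Real.pi * (k + 1)) / N)) ^ N = 1 := by
      rw [ee_pow]
      apply ee_eq_one_iff.2 ⟨-(k+1), ?_⟩
      field_simp
      push_cast
      ring
    simp [hzN]

lemma ee_add (r s : ℝ) : ee (r + s) = ee r * ee s := by
  rw [ee, ee, ee, ← Complex.exp_add]
  congr 1
  push_cast
  ring

lemma summable_mul_ee (c : ℤ → ℂ) (hc : Summable fun k => ‖c k‖) (φ : ℤ → ℝ) :
    Summable fun k => c k * ee (φ k) := by
  apply Summable.of_norm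
  simp only [norm_mul, ee_norm, mul_one]
  exact hc

lemma key (N : ℕ) (hN : 1 ≤ N) (c : ℤ → ℂ) (hc : Summable fun k => ‖c k‖) (ξ : ℝ) :
    ∑' m : ℤ, c ((N : ℤ) * m - 1) * ee (-(2 * Real.pi * m * ξ)) =
      ∑ q ∈ Finset.range N, ee (-(2 * Real.pi * (ξ + q) / N)) *
        ((N : ℂ)⁻¹ * ∑' k : ℤ, c k * ee (-(2 * Real.pi * (k / N) * (ξ + q)))) := by
  have hN0 : (N : ℝ) ≠ 0 := by positivity
  have hNC : (N : ℂ) ≠ 0 := by exact_mod_cast (by positivity : (N:ℝ) ≠ 0)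
  -- Step A : rewrite each summand of the RHS
  have stepA : ∀ q ∈ Finset.range N,
      ee (-(2 * Real.pi * (ξ + q) / N)) *
        ((N : ℂ)⁻¹ * ∑' k : ℤ, c k * ee (-(2 * Real.pi * (k / N) * (ξ + q)))) =
      (N : ℂ)⁻¹ * ∑' k : ℤ, c k * ee (-(2 * Real.pi * (k + 1) * (ξ + q) / N)) := by
    intro q _
    rw [← tsum_mul_left, ← tsum_mul_left, ← tsum_mul_left]
    congr 1
    funext k
    have harg : (-(2 * Real.pi * ((k : ℝ) + 1) * (ξ + q) / N)) =
        (-(2 * Real.pi * (ξ + q) / N)) + (-(2 * Real.pi * ((k : ℝ) / N) * (ξ + q))) := by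
      field_simp
      ring
    rw [harg, ee_add]
    ring
  rw [Finset.sum_congr rfl stepA, ← Finset.mul_sum]
  -- Step B : swap the sums
  have hsummable : ∀ q ∈ Finset.range N,
      Summable fun k : ℤ => c k * ee (-(2 * Real.pi * (k + 1) * (ξ + q) / N)) :=
    fun q _ => summable_mul_ee c hc _
  rw [← Summable.tsum_finsetSum hsummable]
  -- Step C : compute the inner finite sum
  have stepC : ∀ k : ℤ,
      (∑ q ∈ Finset.range N, c k * ee (-(2 * Real.pi * (k + 1) * (ξ + q) / N))) =
      if (N : ℤ) ∣ (k + 1) then (N : ℂ) * (c k * ee (-(2 * Real.pi * (k + 1) * ξ / N))) else 0 := by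
    intro k
    have hsplit : ∀ q : ℕ, ee (-(2 * Real.pi * ((k : ℝ) + 1) * (ξ + q) / N)) =
        ee (-(2 * Real.pi * ((k : ℝ) + 1) * ξ / N)) * ee (-(2 * Real.pi * ((k : ℝ) + 1) * q) / N) := by
      intro q
      rw [← ee_add]
      congr 1
      field_simp
      ring
    calc (∑ q ∈ Finset.range N, c k * ee (-(2 * Real.pi * (k + 1) * (ξ + q) / N)))
        = ∑ q ∈ Finset.range N, (c k * ee (-(2 * Real.pi * ((k : ℝ) + 1) * ξ / N))) *
            ee (-(2 * Real.pi * ((k : ℝ) + 1) * q) / N) := by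
          refine Finset.sum_congr rfl fun q _ => ?_
          rw [hsplit q]; ring
      _ = (c k * ee (-(2 * Real.pi * ((k : ℝ) + 1) * ξ / N))) *
            ∑ q ∈ Finset.range N, ee (-(2 * Real.pi * ((k : ℝ) + 1) * q) / N) := by
          rw [Finset.mul_sum]
      _ = (c k * ee (-(2 * Real.pi * ((k : ℝ) + 1) * ξ / N))) *
            (if (N : ℤ) ∣ (k + 1) then (N : ℂ) else 0) := by rw [sum_roots N hN k]
      _ = _ := by split_ifs with h <;> ring
  -- Step D : reindex
  rw [tsum_congr stepC]
  have hinj : Function.Injective (fun m : ℤ => (N : ℤ) * m - 1) := by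
    intro a b hab
    simp only [sub_left_inj] at hab
    exact mul_left_cancel₀ (Int.natCast_ne_zero.mpr (by omega) : (N:ℤ) ≠ 0) hab
  have hsupp : Function.support (fun k : ℤ =>
      if (N : ℤ) ∣ (k + 1) then (N : ℂ) * (c k * ee (-(2 * Real.pi * (k + 1) * ξ / N))) else 0) ⊆
      Set.range (fun m : ℤ => (N : ℤ) * m - 1) := by
    intro k hk
    by_cases h : (N : ℤ) ∣ (k + 1)
    · obtain ⟨m, hm⟩ := h
      refine ⟨m, ?_⟩
      show (N : ℤ) * m - 1 = k
      omega
    · simp [Function.mem_support, if_neg h] at hk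
  rw [← hinj.tsum_eq hsupp]
  have hterm : ∀ m : ℤ,
      (if (N : ℤ) ∣ (((N : ℤ) * m - 1) + 1) then
        (N : ℂ) * (c ((N : ℤ) * m - 1) * ee (-(2 * Real.pi * (((N : ℤ) * m - 1 : ℤ) + 1) * ξ / N))) else 0) =
      (N : ℂ) * (c ((N : ℤ) * m - 1) * ee (-(2 * Real.pi * m * ξ))) := by
    intro m
    have hd : (N : ℤ) ∣ (((N : ℤ) * m - 1) + 1) := ⟨m, by ring⟩
    rw [if_pos hd]
    congr 3
    push_cast
    field_simp
    ring
  rw [tsum_congr hterm, tsum_mul_left, ← mul_assoc, inv_mul_cancel₀ hNC, one_mul]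

lemma ae_summable_translates (f : ℝ → ℂ) (hf : Integrable f) (N : ℕ) (hN : 1 ≤ N) :
    ∀ᵐ x ∂(volume : Measure ℝ), Summable fun k : ℤ => ‖f (x + (k : ℝ) / N)‖ := by
  set T : ℝ := 1 / N with hTdef
  have hNR : (0:ℝ) < N := by positivity
  have hT : 0 < T := by positivity
  set g : ℝ → ℂ := hf.1.mk f with hgdef
  have hg : StronglyMeasurable g := hf.1.stronglyMeasurable_mk
  have hfg : f =ᵐ[volume] g := hf.1.ae_eq_mk
  have hgi : Integrable g := hf.congr hfg
  set F : ℝ → ENNReal := fun x => ∑' k : ℤ, (‖g ((k : ℝ) * T + x)‖₊ : ENNReal) with hFdef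
  have hFmeas : Measurable F := by
    apply Measurable.ennreal_tsum
    intro k
    exact (hg.measurable.comp (measurable_const_add _)).nnnorm.coe_nnreal_ennreal
  -- fundamental domain
  have hfd := isAddFundamentalDomain_Ioc hT 0 (volume : Measure ℝ)
  -- the equivalence ℤ ≃ zmultiples T
  have hinj : Function.Injective (fun n : ℤ => n • T) := (zsmul_left_strictMono hT).injective
  set e : ℤ ≃ AddSubgroup.zmultiples T :=
    Equiv.ofBijective (fun n : ℤ => (⟨n • T, AddSubgroup.zsmul_mem_zmultiples T n⟩ :
        AddSubgroup.zmultiples T))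
      ⟨fun a b hab => hinj (by simpa using congrArg Subtype.val hab),
       fun γ => by
        obtain ⟨n, hn⟩ := AddSubgroup.mem_zmultiples_iff.1 γ.2
        exact ⟨n, Subtype.ext hn⟩⟩ with hedef
  -- finiteness of the lintegral of F on the fundamental domain
  have hFlt : ∫⁻ x in Set.Ioc 0 (0 + T), F x ∂volume ≠ ⊤ := by
    have h1 := hfd.lintegral_eq_tsum'' (fun x => (‖g x‖₊ : ENNReal))
    have h2 : ∑' γ : AddSubgroup.zmultiples T,
        ∫⁻ x in Set.Ioc 0 (0 + T), (‖g (γ +ᵥ x)‖₊ : ENNReal) ∂volume =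
        ∑' n : ℤ, ∫⁻ x in Set.Ioc 0 (0 + T), (‖g ((n : ℝ) * T + x)‖₊ : ENNReal) ∂volume := by
      rw [← e.tsum_eq]
      refine tsum_congr fun n => ?_
      congr 1
      funext x
      have harg : (e n +ᵥ x : ℝ) = (n : ℝ) * T + x := by
        show (n • T) + x = (n : ℝ) * T + x
        rw [zsmul_eq_mul]
      rw [harg]
    have h3 : ∫⁻ x in Set.Ioc 0 (0 + T), F x ∂volume =
        ∑' n : ℤ, ∫⁻ x in Set.Ioc 0 (0 + T), (‖g ((n : ℝ) * T + x)‖₊ : ENNReal) ∂volume := by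
      rw [hFdef]
      exact lintegral_tsum fun n =>
        ((hg.measurable.comp (measurable_const_add _)).nnnorm.coe_nnreal_ennreal).aemeasurable
    rw [h3, ← h2, ← h1]
    exact hgi.2.ne
  -- periodicity of F
  have hFper : ∀ (n : ℤ) (x : ℝ), F ((n : ℝ) * T + x) = F x := by
    intro n x
    rw [hFdef]
    simp only
    rw [← (Equiv.addRight n).tsum_eq (fun k => (‖g ((k : ℝ) * T + x)‖₊ : ENNReal))]
    refine tsum_congr fun k => ?_
    have harg : ((k : ℝ)) * T + ((n : ℝ) * T + x) = (((Equiv.addRight n) k : ℤ) : ℝ) * T + x := by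
      simp only [Equiv.coe_addRight]
      push_cast
      ring
    rw [harg]
  -- the bad set is null
  set t : Set ℝ := {x | F x = ⊤} with htdef
  have htmeas : MeasurableSet t := hFmeas (measurableSet_singleton ⊤)
  have htnull : volume t = 0 := by
    refine hfd.measure_zero_of_invariant t (fun γ => ?_) ?_
    · ext x
      rw [Set.mem_vadd_set_iff_neg_vadd_mem]
      obtain ⟨n, hn⟩ := AddSubgroup.mem_zmultiples_iff.1 γ.2
      have hcoe : ((-γ : AddSubgroup.zmultiples T) : ℝ) = -(γ : ℝ) := rfl
      have : (-γ : AddSubgroup.zmultiples T) +ᵥ x = ((-n : ℤ) : ℝ) * T + x := by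
        show (((-γ : AddSubgroup.zmultiples T) : ℝ) + x) = ((-n : ℤ) : ℝ) * T + x
        rw [hcoe, ← hn, zsmul_eq_mul]
        push_cast
        ring
      rw [this]
      show F (((-n : ℤ) : ℝ) * T + x) = ⊤ ↔ F x = ⊤
      rw [hFper]
    · have hae : ∀ᵐ x ∂(volume.restrict (Set.Ioc 0 (0 + T))), F x < ⊤ :=
        ae_lt_top hFmeas hFlt
      have h0 : (volume.restrict (Set.Ioc 0 (0 + T))) t = 0 := by
        rw [ae_iff] at hae
        simpa [htdef, not_lt, top_le_iff] using hae
      rwa [Measure.restrict_apply htmeas] at h0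
  -- combine
  have hFfin : ∀ᵐ x ∂(volume : Measure ℝ), F x ≠ ⊤ := by
    rw [ae_iff]
    simpa [htdef] using htnull
  have hagree : ∀ᵐ x ∂(volume : Measure ℝ), ∀ k : ℤ, f (x + (k : ℝ) / N) = g (x + (k : ℝ) / N) := by
    rw [ae_all_iff]
    intro k
    have hmp : MeasurePreserving (fun x : ℝ => x + (k : ℝ) / N) volume volume :=
      measurePreserving_add_right volume _
    exact hmp.quasiMeasurePreserving.ae_eq_comp hfg
  filter_upwards [hFfin, hagree] with x hx hx2
  have hFx : (∑' k : ℤ, (‖f (x + (k : ℝ) / N)‖₊ : ENNReal)) ≠ ⊤ := by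
    have : (∑' k : ℤ, (‖f (x + (k : ℝ) / N)‖₊ : ENNReal)) = F x := by
      refine tsum_congr fun k => ?_
      rw [hx2 k]
      congr 2
      rw [hTdef]
      ring
    rwa [this]
  have := ENNReal.tsum_coe_ne_top_iff_summable.1 hFx
  exact (NNReal.summable_coe.2 this).congr fun k => by simp [coe_nnnorm]

theorem zak_one_of_translate (f : ℝ → ℂ) (hf : Integrable f)
    (N : ℕ) (hN : 1 ≤ N) :
    ∀ᵐ x ∂(volume : Measure ℝ), ∀ ξ : ℝ,
      Zak 1 (fun y => f (y - 1 / N)) x ξ =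
        ∑ q ∈ Finset.range N,
          Complex.exp (-(2 * Real.pi * Complex.I * ((ξ : ℂ) + q) / N)) * Zak N f x (ξ + q) := by
  have hNR : (0:ℝ) < N := by positivity
  filter_upwards [ae_summable_translates f hf N hN] with x hx
  intro ξ
  set c : ℤ → ℂ := fun k => f (x + (k : ℝ) / N) with hcdef
  have hc : Summable fun k => ‖c k‖ := hx
  have hkey := key N hN c hc ξ
  have hL : Zak 1 (fun y => f (y - 1 / N)) x ξ =
      ∑' m : ℤ, c ((N : ℤ) * m - 1) * ee (-(2 * Real.pi * m * ξ)) := by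
    rw [Zak]
    simp only [Nat.cast_one, inv_one, one_mul]
    refine tsum_congr fun m => ?_
    have h1 : x + (m : ℝ) / 1 - 1 / N = x + (((N : ℤ) * m - 1 : ℤ) : ℝ) / N := by
      push_cast
      field_simp
      ring
    have h2 : Complex.exp (-(2 * Real.pi * Complex.I * ((m : ℂ) / 1) * ξ)) =
        ee (-(2 * Real.pi * m * ξ)) := by
      rw [ee]
      congr 1
      push_cast
      ring
    rw [h1, h2, hcdef]
  have hR : ∀ q ∈ Finset.range N,
      Complex.exp (-(2 * Real.pi * Complex.I * ((ξ : ℂ) + q) / N)) * Zak N f x (ξ + q) =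
      ee (-(2 * Real.pi * (ξ + q) / N)) *
        ((N : ℂ)⁻¹ * ∑' k : ℤ, c k * ee (-(2 * Real.pi * (k / N) * (ξ + q)))) := by
    intro q _
    have h1 : Complex.exp (-(2 * Real.pi * Complex.I * ((ξ : ℂ) + q) / N)) =
        ee (-(2 * Real.pi * (ξ + q) / N)) := by
      rw [ee]
      congr 1
      push_cast
      ring
    rw [h1, Zak]
    congr 2
    refine tsum_congr fun k => ?_
    have h2 : Complex.exp (-(2 * Real.pi * Complex.I * ((k : ℂ) / N) * (((ξ + (q : ℝ)) : ℝ) : ℂ))) =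
        ee (-(2 * Real.pi * ((k : ℝ) / N) * (ξ + q))) := by
      rw [ee]
      push_cast
      congr 1
      ring
    rw [h2, hcdef]
  rw [hL, Finset.sum_congr rfl hR, hkey]
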